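/- Let g(z) = ∏_{k=1}^{∞} (1 - z²/αₖ²) with αₖ real, Σ αₖ^{-2} < ∞, and infinitely many αₖ. Then for any fixed real a > 0 and any m ∈ ℕ, the quantity g(iT + ia) - g(iT - ia) is real, nonnegative for T ≥ a, and grows faster than T^m as T → ∞; i.e., (g(iT+ia) - g(iT-ia))/T^m → ∞. -/

import Mathlib

open Complex Filter

theorem g_difference_growth (α : ℕ → ℝ) (hα : ∀ k, α k ≠ 0)
    (hsum : Summable fun k => 1 / (α k) ^ 2)
    (a : ℝ) (ha : 0 < a) (m : ℕ) :
    let g : ℂ → ℂ := fun z => ∏' k : ℕ, (1 - z ^ 2 / ((α k : ℂ)) ^ 2)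
    (∀ T : ℝ, (g (I * T + I * a) - g (I * T - I * a)).im = 0) ∧
    (∀ T : ℝ, a ≤ T → 0 ≤ (g (I * T + I * a) - g (I * T - I * a)).re) ∧
    Tendsto (fun T : ℝ => (g (I * T + I * a) - g (I * T - I * a)).re / T ^ m)
      atTop atTop := by
  intro g
  have hgdef : ∀ z : ℂ, g z = ∏' k : ℕ, (1 - z ^ 2 / ((α k : ℂ)) ^ 2) := fun _ => rfl
  have hα2 : ∀ k, (0:ℝ) < (α k) ^ 2 :=
    fun k => lt_of_le_of_ne (sq_nonneg (α k)) (Ne.symm (pow_ne_zero 2 (hα k)))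
  set F : ℝ → ℕ → ℝ := fun t k => 1 + t ^ 2 / (α k) ^ 2 with hF
  have hF1 : ∀ t k, (1:ℝ) ≤ F t k := by
    intro t k
    have : (0:ℝ) ≤ t ^ 2 / (α k) ^ 2 := div_nonneg (sq_nonneg t) (hα2 k).le
    simp only [hF]; linarith
  have hFpos : ∀ t k, (0:ℝ) < F t k := fun t k => lt_of_lt_of_le one_pos (hF1 t k)
  -- multipliability of the real products
  have hmul : ∀ t : ℝ, Multipliable (F t) := by
    intro t
    have hlog : ∀ _ : Unit, Summable fun k => Real.log (F t k) := by
      intro _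
      apply Summable.of_nonneg_of_le
        (fun k => Real.log_nonneg (hF1 t k))
        (fun k => ?_) ((hsum.mul_left (t ^ 2)).congr (fun k => by rw [mul_one_div]))
      have := Real.log_le_sub_one_of_pos (hFpos t k)
      simp only [hF] at this ⊢
      linarith
    exact Real.multipliable_of_summable_log (fun k => hFpos t k) (hlog ())
  set P : ℝ → ℝ := fun t => ∏' k, F t k with hP
  -- complex values are real
  have hg : ∀ t : ℝ, g (I * (t : ℂ)) = ((P t : ℝ) : ℂ) := by
    intro t
    rw [hgdef]
    have h1 : ∀ k : ℕ, (1 - (I * (t:ℂ)) ^ 2 / ((α k : ℂ)) ^ 2) = ((F t k : ℝ) : ℂ) := by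
      intro k
      simp only [hF]
      push_cast
      rw [mul_pow, I_sq]
      ring
    rw [tprod_congr h1]
    exact ((hmul t).map_tprod Complex.ofRealHom Complex.continuous_ofReal).symm
  have hgval : ∀ T : ℝ,
      g (I * T + I * a) - g (I * T - I * a) = ((P (T + a) - P (T - a) : ℝ) : ℂ) := by
    intro T
    rw [show (I * (T:ℂ) + I * (a:ℂ)) = I * ((T + a : ℝ) : ℂ) by push_cast; ring,
        show (I * (T:ℂ) - I * (a:ℂ)) = I * ((T - a : ℝ) : ℂ) by push_cast; ring,
        hg, hg]
    push_cast
    ring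
  -- monotonicity
  have key0 : ∀ T : ℝ, a ≤ T → P (T - a) ≤ P (T + a) := by
    intro T hT
    refine le_of_tendsto_of_tendsto' (hmul (T - a)).hasProd (hmul (T + a)).hasProd
      (fun s => Finset.prod_le_prod (fun k _ => (hFpos _ k).le) (fun k _ => ?_))
    simp only [hF]
    have hsq : (T - a) ^ 2 ≤ (T + a) ^ 2 := by nlinarith
    exact add_le_add_right ((div_le_div_iff_of_pos_right (hα2 k)).mpr hsq) 1
  -- key growth estimate
  have keyG : ∀ T : ℝ, 0 < T → a ≤ T →
      (4 * a * T / (α 0) ^ 2) * ∏ k ∈ Finset.Icc 1 m, ((T - a) ^ 2 / (α k) ^ 2)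
        ≤ P (T + a) - P (T - a) := by
    intro T hT0 haT
    have hB1 : ∀ k, (1:ℝ) ≤ F (T - a) k := fun k => hF1 _ k
    have hB0 : ∀ k, (0:ℝ) ≤ F (T - a) k := fun k => (hFpos _ k).le
    have hAB : ∀ k, F (T - a) k ≤ F (T + a) k := by
      intro k
      simp only [hF]
      have hsq : (T - a) ^ 2 ≤ (T + a) ^ 2 := by nlinarith
      exact add_le_add_right ((div_le_div_iff_of_pos_right (hα2 k)).mpr hsq) 1
    have htend : Tendsto
        (fun s : Finset ℕ => (∏ k ∈ s, F (T + a) k) - ∏ k ∈ s, F (T - a) k)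
        atTop (nhds (P (T + a) - P (T - a))) :=
      Filter.Tendsto.sub (hmul (T + a)).hasProd (hmul (T - a)).hasProd
    refine ge_of_tendsto htend ?_
    filter_upwards [eventually_ge_atTop (Finset.range (m + 1))] with s hs
    have h0s : (0:ℕ) ∈ s := hs (Finset.mem_range.mpr (Nat.succ_pos m))
    have hsub : Finset.Icc 1 m ⊆ s.erase 0 := by
      intro k hk
      rw [Finset.mem_Icc] at hk
      rw [Finset.mem_erase]
      exact ⟨by omega, hs (Finset.mem_range.mpr (by omega))⟩
    have e1 : ∏ k ∈ s, F (T + a) k = F (T + a) 0 * ∏ k ∈ s.erase 0, F (T + a) k :=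
      (Finset.mul_prod_erase s _ h0s).symm
    have e2 : ∏ k ∈ s, F (T - a) k = F (T - a) 0 * ∏ k ∈ s.erase 0, F (T - a) k :=
      (Finset.mul_prod_erase s _ h0s).symm
    have h2 : ∏ k ∈ s.erase 0, F (T - a) k ≤ ∏ k ∈ s.erase 0, F (T + a) k :=
      Finset.prod_le_prod (fun k _ => hB0 k) (fun k _ => hAB k)
    have h3 : ∏ k ∈ Finset.Icc 1 m, F (T - a) k ≤ ∏ k ∈ s.erase 0, F (T - a) k := by
      rw [← Finset.prod_sdiff hsub]
      have h4 : (1:ℝ) ≤ ∏ k ∈ s.erase 0 \ Finset.Icc 1 m, F (T - a) k := by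
        calc (1:ℝ) = ∏ _k ∈ s.erase 0 \ Finset.Icc 1 m, (1:ℝ) := by
              rw [Finset.prod_const_one]
          _ ≤ _ := Finset.prod_le_prod (fun k _ => zero_le_one) (fun k _ => hB1 k)
      have h5 : (0:ℝ) ≤ ∏ k ∈ Finset.Icc 1 m, F (T - a) k :=
        Finset.prod_nonneg (fun k _ => hB0 k)
      nlinarith
    have h5 : ∏ k ∈ Finset.Icc 1 m, ((T - a) ^ 2 / (α k) ^ 2)
        ≤ ∏ k ∈ Finset.Icc 1 m, F (T - a) k := by
      refine Finset.prod_le_prod (fun k _ => div_nonneg (sq_nonneg _) (hα2 k).le)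
        (fun k _ => ?_)
      simp only [hF]
      linarith
    have hA0B0 : F (T + a) 0 - F (T - a) 0 = 4 * a * T / (α 0) ^ 2 := by
      simp only [hF]
      field_simp
      ring
    have hnn : (0:ℝ) ≤ 4 * a * T / (α 0) ^ 2 :=
      div_nonneg (by nlinarith) (sq_nonneg _)
    calc (4 * a * T / (α 0) ^ 2) * ∏ k ∈ Finset.Icc 1 m, ((T - a) ^ 2 / (α k) ^ 2)
        ≤ (F (T + a) 0 - F (T - a) 0) * ∏ k ∈ s.erase 0, F (T - a) k := by
          rw [hA0B0]
          exact mul_le_mul_of_nonneg_left (h5.trans h3) hnn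
      _ ≤ (∏ k ∈ s, F (T + a) k) - ∏ k ∈ s, F (T - a) k := by
          rw [e1, e2]
          have hX : F (T + a) 0 * ∏ k ∈ s.erase 0, F (T - a) k
              ≤ F (T + a) 0 * ∏ k ∈ s.erase 0, F (T + a) k :=
            mul_le_mul_of_nonneg_left h2 (hFpos _ 0).le
          nlinarith
  -- assemble
  refine ⟨?_, ?_, ?_⟩
  · intro T
    rw [hgval T]
    simp
  · intro T hT
    rw [hgval T]
    simp only [Complex.ofReal_re]
    linarith [key0 T hT]
  · set D : ℝ := ∏ k ∈ Finset.Icc 1 m, (1 / (α k) ^ 2) with hD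
    have hDpos : 0 < D := Finset.prod_pos (fun k _ => by
      rw [one_div]; exact inv_pos.mpr (hα2 k))
    set c : ℝ := 4 * a * D / ((α 0) ^ 2 * 4 ^ m) with hc
    have hcpos : 0 < c := by
      apply div_pos
      · nlinarith
      · exact mul_pos (hα2 0) (by positivity)
    have hbound : ∀ T : ℝ, max (2 * a) 1 ≤ T →
        c * T ≤ (P (T + a) - P (T - a)) / T ^ m := by
      intro T hT
      have hT1 : (1:ℝ) ≤ T := le_trans (le_max_right _ _) hT
      have hT2a : 2 * a ≤ T := le_trans (le_max_left _ _) hT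
      have hT0 : (0:ℝ) < T := lt_of_lt_of_le one_pos hT1
      have haT : a ≤ T := by linarith
      have h1 := keyG T hT0 haT
      have h6 : (T ^ 2 / 4) ^ m * D
          ≤ ∏ k ∈ Finset.Icc 1 m, ((T - a) ^ 2 / (α k) ^ 2) := by
        have hstep : ∀ k ∈ Finset.Icc 1 m,
            (T ^ 2 / 4) * (1 / (α k) ^ 2) ≤ (T - a) ^ 2 / (α k) ^ 2 := by
          intro k _
          rw [mul_one_div]
          refine (div_le_div_iff_of_pos_right (hα2 k)).mpr ?_
          nlinarith
        calc (T ^ 2 / 4) ^ m * D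
            = ∏ k ∈ Finset.Icc 1 m, ((T ^ 2 / 4) * (1 / (α k) ^ 2)) := by
              rw [Finset.prod_mul_distrib, Finset.prod_const, Nat.card_Icc,
                Nat.add_sub_cancel, hD]
          _ ≤ _ := Finset.prod_le_prod (fun k _ => by positivity) hstep
      have h7 : c * T * (T ^ m) ^ 2 ≤ P (T + a) - P (T - a) := by
        have heq : c * T * (T ^ m) ^ 2
            = (4 * a * T / (α 0) ^ 2) * ((T ^ 2 / 4) ^ m * D) := by
          have e : (T ^ 2 / 4) ^ m = (T ^ m) ^ 2 / 4 ^ m := by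
            rw [div_pow, ← pow_mul, ← pow_mul, Nat.mul_comm]
          rw [e, hc]
          field_simp
        rw [heq]
        have hmono := mul_le_mul_of_nonneg_left h6
          (show (0:ℝ) ≤ 4 * a * T / (α 0) ^ 2 from
            div_nonneg (by nlinarith) (sq_nonneg (α 0)))
        exact le_trans hmono h1
      rw [le_div_iff₀ (pow_pos hT0 m)]
      have hTm : (1:ℝ) ≤ T ^ m := by
        calc (1:ℝ) = 1 ^ m := (one_pow m).symm
          _ ≤ T ^ m := pow_le_pow_left₀ zero_le_one hT1 m
      have hx : (0:ℝ) ≤ c * T * T ^ m :=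
        mul_nonneg (mul_nonneg hcpos.le hT0.le) (pow_nonneg hT0.le m)
      calc c * T * T ^ m ≤ (c * T * T ^ m) * T ^ m := le_mul_of_one_le_right hx hTm
        _ = c * T * (T ^ m) ^ 2 := by ring
        _ ≤ _ := h7
    have hct : Tendsto (fun T : ℝ => c * T) atTop atTop :=
      Tendsto.const_mul_atTop hcpos tendsto_id
    apply tendsto_atTop_mono' atTop ?_ hct
    filter_upwards [eventually_ge_atTop (max (2 * a) 1)] with T hT
    rw [hgval T]
    simp only [Complex.ofReal_re]
    exact hbound T hT
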